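/- Let A be a unital C*-algebra and let x ∈ A be a selfadjoint element that does not lie in the center of A. Then the set of inner automorphisms { a ↦ exp(i·x/n) · a · exp(i·x/n)⁻¹ : n ∈ ℕ, n ≥ 1 } is infinite (i.e., the corresponding maps A → A form an infinite set). -/

import Mathlib

open NormedSpace Filter Topology

/-- If `x` is a selfadjoint, non-central element of a unital C*-algebra `A`, then the inner
automorphisms `a ↦ exp(i•x/n) * a * exp(i•x/n)⁻¹`, for `n ≥ 1`, form an infinite set of maps. -/
theorem stmt_3 {A : Type*} [NormedRing A] [StarRing A] [CStarRing A]
    [NormedAlgebra ℂ A] [CompleteSpace A] [StarModule ℂ A]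
    (x : A) (hx : IsSelfAdjoint x) (hxc : x ∉ Set.center A) :
    Set.Infinite {f : A → A | ∃ n : ℕ, 1 ≤ n ∧
      f = fun a => exp ((Complex.I / (n : ℂ)) • x) * a *
        Ring.inverse (exp ((Complex.I / (n : ℂ)) • x))} := by
  intro hfin
  let +nondep : NormedAlgebra ℚ A := .restrictScalars ℚ ℂ A
  set S : Set (A → A) := {f : A → A | ∃ n : ℕ, 1 ≤ n ∧
      f = fun a => exp ((Complex.I / (n : ℂ)) • x) * a *
        Ring.inverse (exp ((Complex.I / (n : ℂ)) • x))} with hS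
  set g : ℂ → A := fun z => exp (z • x) with hg
  have ginv : ∀ z : ℂ, Ring.inverse (g z) = g (-z) := fun z => by
    rw [hg]; simp only [neg_smul]; exact Ring.inverse_exp (z • x)
  have gmul : ∀ z w : ℂ, g z * g w = g (z + w) := fun z w => by
    rw [hg]; simp only
    rw [← exp_add_of_commute (((Commute.refl x).smul_left z).smul_right w), add_smul]
  have gzero : g 0 = 1 := by rw [hg]; simp [exp_zero]
  have gcont : Continuous g := exp_continuous.comp (continuous_id.smul continuous_const)
  -- the maps, indexed by `n+1`
  set F : ℕ → (A → A) := fun n => fun a =>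
    g (Complex.I / ((n : ℂ) + 1)) * a * Ring.inverse (g (Complex.I / ((n : ℂ) + 1))) with hF
  have hFmem : ∀ n, F n ∈ S := by
    intro n
    refine ⟨n + 1, Nat.succ_le_succ (Nat.zero_le n), ?_⟩
    rw [hF]; push_cast; rfl
  haveI : Finite S := hfin.to_subtype
  set φ : ℕ → S := fun n => ⟨F n, hFmem n⟩ with hφ
  obtain ⟨y, hy⟩ := Finite.exists_infinite_fiber φ
  set p : ℕ → Prop := fun n => φ n = y with hp
  have hpinf : (setOf p).Infinite := by
    rw [Set.infinite_coe_iff] at hy; exact hy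
  -- sequence
  set N : ℕ → ℕ := fun k => Nat.nth p k + 1 with hN
  set z : ℕ → ℂ := fun k => Complex.I / ((N k : ℕ) : ℂ) with hz
  have hzF : ∀ k, F (Nat.nth p k) = fun a => g (z k) * a * Ring.inverse (g (z k)) := by
    intro k; rw [hF, hz, hN]; push_cast; rfl
  have hzne : ∀ k, z k ≠ 0 := by
    intro k
    rw [hz]
    simp only [div_eq_mul_inv]
    refine mul_ne_zero Complex.I_ne_zero (inv_ne_zero ?_)
    exact Nat.cast_ne_zero.mpr (Nat.succ_ne_zero _)
  -- z tends to 0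
  have hNk : ∀ k : ℕ, (k : ℝ) + 1 ≤ ((N k : ℕ) : ℝ) := by
    intro k
    have h1 : (k : ℝ) ≤ (Nat.nth p k : ℝ) :=
      Nat.cast_le.mpr (Nat.nth_strictMono hpinf).le_apply
    rw [hN]; push_cast; linarith
  have hztend : Tendsto z atTop (𝓝 0) := by
    rw [tendsto_zero_iff_norm_tendsto_zero]
    have hnorm : ∀ k, ‖z k‖ = 1 / ((N k : ℕ) : ℝ) := by
      intro k
      rw [hz]
      simp [norm_div, Complex.norm_I, Complex.norm_natCast, one_div]
    simp only [hnorm]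
    refine squeeze_zero (fun k => by positivity) (fun k => ?_)
      tendsto_one_div_add_atTop_nhds_zero_nat
    exact one_div_le_one_div_of_le (by positivity) (hNk k)
  have hzt' : Tendsto z atTop (𝓝[≠] (0:ℂ)) := by
    rw [tendsto_nhdsWithin_iff]
    exact ⟨hztend, Eventually.of_forall fun k => hzne k⟩
  -- all maps agree
  have hfun : ∀ k, F (Nat.nth p k) = F (Nat.nth p 0) := by
    intro k
    have h1 : p (Nat.nth p k) := Nat.nth_mem_of_infinite hpinf k
    have h2 : p (Nat.nth p 0) := Nat.nth_mem_of_infinite hpinf 0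
    rw [hp] at h1 h2
    have h3 := h1.trans h2.symm
    exact congrArg Subtype.val h3
  -- x is central: contradiction
  apply hxc
  rw [Semigroup.mem_center_iff]
  intro a
  -- commutation facts
  have key : ∀ k, g (z k) * a * g (-(z k)) = g (z 0) * a * g (-(z 0)) := by
    intro k
    have h := congrFun (hzF k ▸ hzF 0 ▸ hfun k) a
    simpa only [ginv] using h
  have hw : ∀ k, g (z k - z 0) * a = a * g (z k - z 0) := by
    intro k
    have e1 : g (-(z 0)) * g (z 0) = 1 := by rw [gmul]; simp [gzero]
    have h2 : g (-(z 0)) * (g (z 0) * a * g (-(z 0))) * g (z 0) = a := by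
      calc g (-(z 0)) * (g (z 0) * a * g (-(z 0))) * g (z 0)
          = (g (-(z 0)) * g (z 0)) * a * (g (-(z 0)) * g (z 0)) := by simp only [mul_assoc]
        _ = a := by rw [e1, one_mul, mul_one]
    have h4 : g (-(z 0)) * g (z k) * a * (g (-(z k)) * g (z 0)) = a := by
      calc g (-(z 0)) * g (z k) * a * (g (-(z k)) * g (z 0))
          = g (-(z 0)) * (g (z k) * a * g (-(z k))) * g (z 0) := by simp only [mul_assoc]
        _ = g (-(z 0)) * (g (z 0) * a * g (-(z 0))) * g (z 0) := by rw [key]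
        _ = a := h2
    have h3 : g (z k - z 0) * a * g (z 0 - z k) = a := by
      rw [show z k - z 0 = -(z 0) + z k by ring, show z 0 - z k = -(z k) + z 0 by ring,
        ← gmul, ← gmul]
      exact h4
    have e2 : g (z 0 - z k) * g (z k - z 0) = 1 := by rw [gmul]; simp [gzero]
    calc g (z k - z 0) * a = g (z k - z 0) * a * (g (z 0 - z k) * g (z k - z 0)) := by
          rw [e2, mul_one]
      _ = (g (z k - z 0) * a * g (z 0 - z k)) * g (z k - z 0) := by simp only [mul_assoc]
      _ = a * g (z k - z 0) := by rw [h3]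
  -- limit: g(-(z 0)) commutes with a
  have ht : Tendsto (fun k => g (z k - z 0)) atTop (𝓝 (g (-(z 0)))) := by
    have h5 : Tendsto (fun k => z k - z 0) atTop (𝓝 (-(z 0))) := by
      simpa using hztend.sub_const (z 0)
    exact (gcont.tendsto _).comp h5
  have hcomm0 : g (-(z 0)) * a = a * g (-(z 0)) := by
    have t1 : Tendsto (fun k => g (z k - z 0) * a) atTop (𝓝 (g (-(z 0)) * a)) :=
      ht.mul tendsto_const_nhds
    have t2 : Tendsto (fun k => g (z k - z 0) * a) atTop (𝓝 (a * g (-(z 0)))) := by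
      simp only [hw]
      exact tendsto_const_nhds.mul ht
    exact tendsto_nhds_unique t1 t2
  have hcomm0' : g (z 0) * a = a * g (z 0) := by
    have e1 : g (z 0) * g (-(z 0)) = 1 := by rw [gmul]; simp [gzero]
    have e2 : g (-(z 0)) * g (z 0) = 1 := by rw [gmul]; simp [gzero]
    calc g (z 0) * a = g (z 0) * a * (g (-(z 0)) * g (z 0)) := by rw [e2, mul_one]
      _ = g (z 0) * (a * g (-(z 0))) * g (z 0) := by simp only [mul_assoc]
      _ = g (z 0) * (g (-(z 0)) * a) * g (z 0) := by rw [hcomm0]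
      _ = (g (z 0) * g (-(z 0))) * (a * g (z 0)) := by simp only [mul_assoc]
      _ = a * g (z 0) := by rw [e1, one_mul]
  have hcommk : ∀ k, g (z k) * a = a * g (z k) := by
    intro k
    have e3 : g (z k) = g (z k - z 0) * g (z 0) := by
      rw [gmul, show z k - z 0 + z 0 = z k by ring]
    rw [e3, mul_assoc, hcomm0', ← mul_assoc, hw k, mul_assoc]
  -- derivative / slope argument
  have hderiv : HasDerivAt g x 0 := by
    have h6 := hasDerivAt_exp_smul_const (𝕂 := ℂ) x 0
    simpa [hg, zero_smul, exp_zero] using h6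
  have hslope : Tendsto (fun k => slope g 0 (z k)) atTop (𝓝 x) :=
    (hasDerivAt_iff_tendsto_slope.mp hderiv).comp hzt'
  have hslopecomm : ∀ k, slope g 0 (z k) * a = a * slope g 0 (z k) := by
    intro k
    have hc : (g (z k) - g 0) * a = a * (g (z k) - g 0) := by
      rw [sub_mul, mul_sub, hcommk k, gzero, one_mul, mul_one]
    rw [slope_def_module, sub_zero, smul_mul_assoc, hc, mul_smul_comm]
  have t1 : Tendsto (fun k => slope g 0 (z k) * a) atTop (𝓝 (x * a)) :=
    hslope.mul tendsto_const_nhds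
  have t2 : Tendsto (fun k => slope g 0 (z k) * a) atTop (𝓝 (a * x)) := by
    simp only [hslopecomm]
    exact tendsto_const_nhds.mul hslope
  exact tendsto_nhds_unique t2 t1
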